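/- Let q, β be complex numbers with |q| < 1 and β q^j ≠ 1 for all integers j ≥ 1. Then Sylvester's formula holds: Σ_{n=0}^{∞} (−1)^n β^n q^{n(3n+1)/2} (1 − β q^{2n+1}) / ( (q; q)_n · (β q^{n+1}; q)_∞ ) = 1, where the series converges. -/

import Mathlib

open Finset

namespace SylvAux

def aa (n : ℕ) : ℕ := n * (3 * n + 1) / 2

lemma aa_succ (n : ℕ) : aa (n + 1) = aa n + (3 * n + 2) := by
  unfold aa
  have h : (n + 1) * (3 * (n + 1) + 1) = n * (3 * n + 1) + (3 * n + 2) * 2 := by ring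
  rw [h, Nat.add_mul_div_right _ _ (by norm_num)]

lemma aa_zero : aa 0 = 0 := rfl

lemma le_aa (n : ℕ) : n ≤ aa n := by
  unfold aa
  rw [Nat.le_div_iff_mul_le (by norm_num)]
  nlinarith [sq_nonneg n]

-- Weierstrass product lower bound
lemma weier (r : ℕ → ℝ) (h0 : ∀ j, 0 ≤ r j) (h1 : ∀ j, r j ≤ 1) (n : ℕ) :
    1 - ∑ j ∈ range n, r j ≤ ∏ j ∈ range n, (1 - r j) := by
  induction n with
  | zero => simp
  | succ n ih =>
    rw [Finset.sum_range_succ, Finset.prod_range_succ]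
    have hpn : (0:ℝ) ≤ ∏ j ∈ range n, (1 - r j) :=
      Finset.prod_nonneg fun j _ => by linarith [h1 j]
    have hp1 : ∏ j ∈ range n, (1 - r j) ≤ 1 :=
      Finset.prod_le_one (fun j _ => by linarith [h1 j]) (fun j _ => by linarith [h0 j])
    nlinarith [h0 n, h1 n]

-- partial geometric sum bound
lemma geom_partial_le {r : ℝ} (h0 : 0 ≤ r) (h1 : r < 1) (n : ℕ) :
    ∑ j ∈ range n, r ^ j ≤ (1 - r)⁻¹ := by
  have := Summable.sum_le_tsum (range n) (fun i _ => pow_nonneg h0 i) (summable_geometric_of_lt_one h0 h1)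
  rwa [tsum_geometric_of_lt_one h0 h1] at this

end SylvAux

namespace S2
open SylvAux

noncomputable def Qp (q : ℂ) (n : ℕ) : ℂ := ∏ j ∈ range n, (1 - q ^ (j + 1))
noncomputable def Bp (q x : ℂ) (n : ℕ) : ℂ := ∏ j ∈ range n, (1 - x * q ^ (j + 1))
noncomputable def tt (q x : ℂ) (n : ℕ) : ℂ :=
  (-1) ^ n * x ^ n * q ^ aa n * (1 - x * q ^ (2 * n + 1)) * Bp q x n / Qp q n
noncomputable def ww (q x : ℂ) (n : ℕ) : ℂ :=
  (-1) ^ n * x ^ (n + 1) * q ^ aa (n + 1) * Bp q x (n + 1) / Qp q n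

lemma one_sub_norm_pos {q : ℂ} (hq : ‖q‖ < 1) (j : ℕ) : 0 < 1 - ‖q‖ ^ (j + 1) := by
  have : ‖q‖ ^ (j+1) < 1 := pow_lt_one₀ (norm_nonneg q) hq (Nat.succ_ne_zero j)
  linarith

lemma Qp_ne {q : ℂ} (hq : ‖q‖ < 1) (n : ℕ) : Qp q n ≠ 0 := by
  refine Finset.prod_ne_zero_iff.2 fun j _ => ?_
  intro h
  have h1 : (1:ℝ) - ‖q‖ ^ (j+1) ≤ ‖1 - q ^ (j+1)‖ := by
    have := norm_sub_norm_le (1:ℂ) (q ^ (j+1)); simpa [norm_pow] using this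
  rw [h, norm_zero] at h1
  linarith [one_sub_norm_pos hq j]

lemma Qp_lower {q : ℂ} (hq : ‖q‖ < 1) : ∃ c : ℝ, 0 < c ∧ ∀ n, c ≤ ‖Qp q n‖ := by
  obtain ⟨J, hJ⟩ : ∃ J : ℕ, ‖q‖ ^ (J + 1) * (1 - ‖q‖)⁻¹ ≤ 1 / 2 := by
    have h := tendsto_pow_atTop_nhds_zero_of_lt_one (norm_nonneg q) hq
    have h2 := h.mul_const (1 - ‖q‖)⁻¹
    rw [zero_mul] at h2
    obtain ⟨J, hJ⟩ := (h2.eventually (eventually_le_nhds (show (0:ℝ) < 1/2 by norm_num))).exists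
    refine ⟨J, le_trans (mul_le_mul_of_nonneg_right
      (pow_le_pow_of_le_one (norm_nonneg q) hq.le (by omega)) (inv_nonneg.2 (by linarith))) hJ⟩
  have hfac0 : ∀ j : ℕ, (0:ℝ) ≤ 1 - ‖q‖ ^ (j+1) := fun j => (one_sub_norm_pos hq j).le
  have hfac1 : ∀ j : ℕ, (1:ℝ) - ‖q‖ ^ (j+1) ≤ 1 := fun j => by
    have : (0:ℝ) ≤ ‖q‖ ^ (j+1) := by positivity
    linarith
  refine ⟨(∏ j ∈ range J, (1 - ‖q‖ ^ (j + 1))) * (1 / 2),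
    mul_pos (Finset.prod_pos fun j _ => one_sub_norm_pos hq j) (by norm_num), fun n => ?_⟩
  have step1 : ∏ j ∈ range n, (1 - ‖q‖ ^ (j + 1)) ≤ ‖Qp q n‖ := by
    rw [Qp, norm_prod]
    refine Finset.prod_le_prod (fun j _ => hfac0 j) (fun j _ => ?_)
    have := norm_sub_norm_le (1:ℂ) (q ^ (j+1)); simpa [norm_pow] using this
  refine le_trans ?_ step1
  rcases le_or_gt n J with hn | hn
  · have h1 : ∏ j ∈ range J, (1 - ‖q‖ ^ (j + 1)) ≤ ∏ j ∈ range n, (1 - ‖q‖ ^ (j + 1)) := by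
      rw [show J = n + (J - n) by omega, Finset.prod_range_add]
      have h2 : ∏ i ∈ range (J - n), (1 - ‖q‖ ^ (n + i + 1)) ≤ 1 :=
        Finset.prod_le_one (fun j _ => hfac0 _) (fun j _ => hfac1 _)
      have h3 : (0:ℝ) ≤ ∏ j ∈ range n, (1 - ‖q‖ ^ (j + 1)) :=
        Finset.prod_nonneg fun j _ => hfac0 j
      nlinarith [Finset.prod_nonneg (fun j (_ : j ∈ range (J-n)) => hfac0 (n+j))]
    have h4 : (0:ℝ) ≤ ∏ j ∈ range J, (1 - ‖q‖ ^ (j + 1)) :=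
      Finset.prod_nonneg fun j _ => hfac0 j
    nlinarith
  · rw [show n = J + (n - J) by omega, Finset.prod_range_add]
    refine mul_le_mul_of_nonneg_left ?_ (Finset.prod_nonneg fun j _ => hfac0 j)
    have hw := weier (fun i => ‖q‖ ^ (J + i + 1)) (fun i => by positivity)
      (fun i => le_trans (le_of_eq rfl) (by
        have : ‖q‖ ^ (J + i + 1) ≤ 1 := pow_le_one₀ (norm_nonneg q) hq.le
        linarith)) (n - J)
    have hsum : ∑ i ∈ range (n - J), ‖q‖ ^ (J + i + 1) ≤ 1 / 2 := by
      have : ∀ i, ‖q‖ ^ (J + i + 1) = ‖q‖ ^ (J + 1) * ‖q‖ ^ i := fun i => by ring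
      calc ∑ i ∈ range (n - J), ‖q‖ ^ (J + i + 1)
          = ‖q‖ ^ (J + 1) * ∑ i ∈ range (n - J), ‖q‖ ^ i := by
            rw [Finset.mul_sum]; exact Finset.sum_congr rfl fun i _ => this i
        _ ≤ ‖q‖ ^ (J + 1) * (1 - ‖q‖)⁻¹ := by
            exact mul_le_mul_of_nonneg_left (geom_partial_le (norm_nonneg q) hq _) (by positivity)
        _ ≤ 1 / 2 := hJ
    have : ∀ i ∈ range (n - J), (1:ℝ) - ‖q‖ ^ (J + i + 1) = 1 - ‖q‖ ^ (J + (i + 1)) := by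
      intro i _; ring_nf
    calc (1:ℝ)/2 = 1 - 1/2 := by norm_num
      _ ≤ 1 - ∑ i ∈ range (n - J), ‖q‖ ^ (J + i + 1) := by linarith
      _ ≤ ∏ i ∈ range (n - J), (1 - ‖q‖ ^ (J + i + 1)) := hw
      _ = ∏ i ∈ range (n - J), (1 - ‖q‖ ^ (J + i + 1)) := rfl

end S2

namespace S3
open SylvAux S2

lemma norm_Bp_le {q x : ℂ} {R : ℝ} (hq : ‖q‖ < 1) (hx : ‖x‖ ≤ R) (n : ℕ) :
    ‖Bp q x n‖ ≤ Real.exp (R * ‖q‖ * (1 - ‖q‖)⁻¹) := by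
  have hR : 0 ≤ R := le_trans (norm_nonneg x) hx
  rw [Bp, norm_prod]
  calc ∏ j ∈ range n, ‖1 - x * q ^ (j + 1)‖
      ≤ ∏ j ∈ range n, Real.exp (R * ‖q‖ ^ (j + 1)) := by
        refine Finset.prod_le_prod (fun j _ => norm_nonneg _) (fun j _ => ?_)
        calc ‖1 - x * q ^ (j+1)‖ ≤ ‖(1:ℂ)‖ + ‖x * q ^ (j+1)‖ := norm_sub_le _ _
          _ = 1 + ‖x‖ * ‖q‖ ^ (j+1) := by rw [norm_one, norm_mul, norm_pow]
          _ ≤ 1 + R * ‖q‖ ^ (j+1) := by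
              have : ‖x‖ * ‖q‖ ^ (j+1) ≤ R * ‖q‖ ^ (j+1) :=
                mul_le_mul_of_nonneg_right hx (by positivity)
              linarith
          _ ≤ Real.exp (R * ‖q‖ ^ (j+1)) := by
              have := Real.add_one_le_exp (R * ‖q‖ ^ (j+1)); linarith
    _ = Real.exp (∑ j ∈ range n, R * ‖q‖ ^ (j + 1)) := (Real.exp_sum _ _).symm
    _ ≤ Real.exp (R * ‖q‖ * (1 - ‖q‖)⁻¹) := by
        apply Real.exp_le_exp.2
        calc ∑ j ∈ range n, R * ‖q‖ ^ (j + 1) = R * ‖q‖ * ∑ j ∈ range n, ‖q‖ ^ j := by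
              rw [Finset.mul_sum]; exact Finset.sum_congr rfl fun j _ => by ring
          _ ≤ R * ‖q‖ * (1 - ‖q‖)⁻¹ :=
              mul_le_mul_of_nonneg_left (geom_partial_le (norm_nonneg q) hq _) (by positivity)

lemma norm_tt_le {q x : ℂ} {R c : ℝ} (hq : ‖q‖ < 1) (hc : 0 < c) (hQ : ∀ n, c ≤ ‖Qp q n‖)
    (hx : ‖x‖ ≤ R) (n : ℕ) :
    ‖tt q x n‖ ≤ (1 + R) * Real.exp (R * ‖q‖ * (1 - ‖q‖)⁻¹) / c * (‖x‖ ^ n * ‖q‖ ^ aa n) := by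
  have hR : 0 ≤ R := le_trans (norm_nonneg x) hx
  rw [tt, norm_div]
  rw [div_le_iff₀ (lt_of_lt_of_le hc (hQ n))]
  have h1 : ‖1 - x * q ^ (2 * n + 1)‖ ≤ 1 + R := by
    calc ‖1 - x * q ^ (2*n+1)‖ ≤ ‖(1:ℂ)‖ + ‖x * q ^ (2*n+1)‖ := norm_sub_le _ _
      _ = 1 + ‖x‖ * ‖q‖ ^ (2*n+1) := by rw [norm_one, norm_mul, norm_pow]
      _ ≤ 1 + R := by
          have h2 : ‖q‖ ^ (2*n+1) ≤ 1 := pow_le_one₀ (norm_nonneg q) hq.le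
          nlinarith [norm_nonneg x, pow_nonneg (norm_nonneg q) (2*n+1)]
  have hB := norm_Bp_le hq hx n
  have hnum : ‖(-1:ℂ) ^ n * x ^ n * q ^ aa n * (1 - x * q ^ (2 * n + 1)) * Bp q x n‖
      ≤ ‖x‖ ^ n * ‖q‖ ^ aa n * ((1 + R) * Real.exp (R * ‖q‖ * (1 - ‖q‖)⁻¹)) := by
    rw [norm_mul, norm_mul, norm_mul, norm_mul, norm_pow, norm_pow, norm_pow, norm_neg, norm_one,
      one_pow, one_mul]
    calc ‖x‖ ^ n * ‖q‖ ^ aa n * ‖1 - x * q ^ (2*n+1)‖ * ‖Bp q x n‖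
        ≤ ‖x‖ ^ n * ‖q‖ ^ aa n * (1 + R) * Real.exp (R * ‖q‖ * (1 - ‖q‖)⁻¹) := by
          apply mul_le_mul (mul_le_mul_of_nonneg_left h1 (by positivity)) hB (norm_nonneg _)
          positivity
      _ = ‖x‖ ^ n * ‖q‖ ^ aa n * ((1 + R) * Real.exp (R * ‖q‖ * (1 - ‖q‖)⁻¹)) := by ring
  calc ‖(-1:ℂ) ^ n * x ^ n * q ^ aa n * (1 - x * q ^ (2 * n + 1)) * Bp q x n‖
      ≤ ‖x‖ ^ n * ‖q‖ ^ aa n * ((1 + R) * Real.exp (R * ‖q‖ * (1 - ‖q‖)⁻¹)) := hnum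
    _ = (1 + R) * Real.exp (R * ‖q‖ * (1 - ‖q‖)⁻¹) / c * (‖x‖ ^ n * ‖q‖ ^ aa n) * c := by
        field_simp
    _ ≤ (1 + R) * Real.exp (R * ‖q‖ * (1 - ‖q‖)⁻¹) / c * (‖x‖ ^ n * ‖q‖ ^ aa n) * ‖Qp q n‖ := by
        apply mul_le_mul_of_nonneg_left (hQ n)
        positivity

lemma summable_pow_aa {R r : ℝ} (hR : 0 ≤ R) (h0 : 0 ≤ r) (h1 : r < 1) :
    Summable (fun n => R ^ n * r ^ aa n) := by
  apply summable_of_ratio_norm_eventually_le (show (1:ℝ)/2 < 1 by norm_num)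
  have ht : Filter.Tendsto (fun n : ℕ => R * r ^ n) Filter.atTop (nhds 0) := by
    simpa using (tendsto_pow_atTop_nhds_zero_of_lt_one h0 h1).const_mul R
  filter_upwards [ht.eventually (eventually_le_nhds (show (0:ℝ) < 1/2 by norm_num))] with n hn
  have key : R ^ (n+1) * r ^ aa (n+1) = (R ^ n * r ^ aa n) * (R * r ^ (3*n+2)) := by
    rw [aa_succ, pow_add, pow_succ]; ring
  rw [Real.norm_of_nonneg (by positivity), Real.norm_of_nonneg (by positivity), key]
  have h3 : R * r ^ (3*n+2) ≤ R * r ^ n :=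
    mul_le_mul_of_nonneg_left (pow_le_pow_of_le_one h0 h1.le (by omega)) hR
  have h4 : (0:ℝ) ≤ R ^ n * r ^ aa n := by positivity
  nlinarith

lemma summable_tt {q : ℂ} {c : ℝ} (hq : ‖q‖ < 1) (hc : 0 < c) (hQ : ∀ n, c ≤ ‖Qp q n‖) (x : ℂ) :
    Summable (tt q x) := by
  apply Summable.of_norm_bounded (((summable_pow_aa (norm_nonneg x) (norm_nonneg q) hq).mul_left
    ((1 + ‖x‖) * Real.exp (‖x‖ * ‖q‖ * (1 - ‖q‖)⁻¹) / c)))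
  exact fun n => norm_tt_le hq hc hQ le_rfl n

end S3

namespace S4
open SylvAux S2

lemma one_sub_pow_ne {q : ℂ} (hq : ‖q‖ < 1) (j : ℕ) : (1:ℂ) - q ^ (j+1) ≠ 0 := by
  intro h
  have h1 : (1:ℝ) - ‖q‖ ^ (j+1) ≤ ‖1 - q ^ (j+1)‖ := by
    have := norm_sub_norm_le (1:ℂ) (q ^ (j+1)); simpa [norm_pow] using this
  rw [h, norm_zero] at h1
  linarith [one_sub_norm_pos hq j]

lemma Bp_shift (q x : ℂ) (m : ℕ) : Bp q x (m+1) = (1 - x*q) * Bp q (x*q) m := by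
  rw [Bp, Finset.prod_range_succ', Bp, mul_comm]
  congr 1
  · norm_num
  · exact Finset.prod_congr rfl fun j _ => by ring

lemma d_zero (q x : ℂ) : tt q x 0 - (1 - x*q) * tt q (x*q) 0 = ww q x 0 := by
  have h1 : aa 1 = 2 := rfl
  simp only [tt, ww, Bp, Qp, aa_zero, h1, Finset.range_zero, Finset.range_one,
    Finset.prod_empty, Finset.prod_singleton]
  norm_num
  ring

lemma d_succ {q : ℂ} (hq : ‖q‖ < 1) (x : ℂ) (n : ℕ) :
    tt q x (n+1) - (1 - x*q) * tt q (x*q) (n+1) = ww q x (n+1) - ww q x n := by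
  have hQn := Qp_ne hq n
  have hq1 := one_sub_pow_ne hq n
  have hQsucc : Qp q (n+1) = Qp q n * (1 - q^(n+1)) := Finset.prod_range_succ _ n
  have hB1 : Bp q x (n+1) = Bp q x n * (1 - x*q^(n+1)) := Finset.prod_range_succ _ n
  have hB2 : Bp q x (n+1+1) = Bp q x n * (1 - x*q^(n+1)) * (1 - x*q^(n+1+1)) := by
    rw [Bp, Finset.prod_range_succ, ← Bp, hB1]
  have hY : Bp q x n * (1 - x*q^(n+1)) * (1 - x*q^(n+1+1)) = (1 - x*q) * Bp q (x*q) (n+1) := by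
    rw [← hB2, Bp_shift]
  have key : (1 - x*q) * tt q (x*q) (n+1) =
      (-1)^(n+1) * (x*q)^(n+1) * q^(aa (n+1)) * (1 - (x*q)*q^(2*(n+1)+1)) *
        (Bp q x n * (1 - x*q^(n+1)) * (1 - x*q^(n+1+1))) / Qp q (n+1) := by
    rw [tt, hY]; ring
  have haa2 : aa (n+1+1) = aa (n+1) + (3*n+5) := by
    have := aa_succ (n+1); omega
  rw [key, tt, ww, ww, haa2, pow_add, hQsucc, hB1, hB2]
  field_simp
  ring

open S3 in
lemma ww_tendsto_zero {q : ℂ} {c : ℝ} (hq : ‖q‖ < 1) (hc : 0 < c) (hQ : ∀ n, c ≤ ‖Qp q n‖)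
    (x : ℂ) : Filter.Tendsto (ww q x) Filter.atTop (nhds 0) := by
  rw [tendsto_zero_iff_norm_tendsto_zero]
  have maj := (summable_pow_aa (norm_nonneg x) (norm_nonneg q) hq).tendsto_atTop_zero
  refine squeeze_zero (fun n => norm_nonneg _) (fun n => ?_) (by
    simpa using maj.const_mul (‖x‖ * Real.exp (‖x‖*‖q‖*(1-‖q‖)⁻¹) / c))
  show ‖ww q x n‖ ≤ ‖x‖ * Real.exp (‖x‖*‖q‖*(1-‖q‖)⁻¹) / c * (‖x‖ ^ n * ‖q‖ ^ aa n)
  rw [ww, norm_div, div_le_iff₀ (lt_of_lt_of_le hc (hQ n))]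
  have hB := norm_Bp_le hq (le_refl ‖x‖) (n+1)
  have hqa : ‖q‖ ^ aa (n+1) ≤ ‖q‖ ^ aa n := by
    apply pow_le_pow_of_le_one (norm_nonneg q) hq.le
    rw [aa_succ]; omega
  have hnum : ‖(-1:ℂ)^n * x^(n+1) * q^(aa (n+1)) * Bp q x (n+1)‖
      ≤ ‖x‖^(n+1) * ‖q‖^(aa n) * Real.exp (‖x‖*‖q‖*(1-‖q‖)⁻¹) := by
    rw [norm_mul, norm_mul, norm_mul, norm_pow, norm_pow, norm_pow, norm_neg, norm_one, one_pow,
      one_mul]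
    have h1 : ‖x‖^(n+1) * ‖q‖^(aa (n+1)) ≤ ‖x‖^(n+1) * ‖q‖^(aa n) :=
      mul_le_mul_of_nonneg_left hqa (by positivity)
    exact mul_le_mul h1 hB (norm_nonneg _) (by positivity)
  refine hnum.trans ?_
  have heq : ‖x‖^(n+1) * ‖q‖^(aa n) * Real.exp (‖x‖*‖q‖*(1-‖q‖)⁻¹)
      = ‖x‖ * Real.exp (‖x‖*‖q‖*(1-‖q‖)⁻¹) / c * (‖x‖ ^ n * ‖q‖ ^ aa n) * c := by
    field_simp; ring
  rw [heq]
  exact mul_le_mul_of_nonneg_left (hQ n) (by positivity)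

open S3 in
lemma funEq {q : ℂ} {c : ℝ} (hq : ‖q‖ < 1) (hc : 0 < c) (hQ : ∀ n, c ≤ ‖Qp q n‖) (x : ℂ) :
    ∑' n, tt q x n = (1 - x*q) * ∑' n, tt q (x*q) n := by
  have hs1 := summable_tt hq hc hQ x
  have hs2 := (summable_tt hq hc hQ (x*q)).mul_left (1 - x*q)
  have hd : Summable (fun n => tt q x n - (1-x*q) * tt q (x*q) n) := hs1.sub hs2
  have hkey : ∀ N : ℕ, ∑ n ∈ range (N+1), (tt q x n - (1-x*q)*tt q (x*q) n) = ww q x N := by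
    intro N
    induction N with
    | zero => simpa using d_zero q x
    | succ N ih => rw [Finset.sum_range_succ, ih, d_succ hq x N]; ring
  have hzero : HasSum (fun n => tt q x n - (1-x*q)*tt q (x*q) n) 0 := by
    rw [hd.hasSum_iff_tendsto_nat, ← Filter.tendsto_add_atTop_iff_nat 1]
    simp only [hkey]
    exact ww_tendsto_zero hq hc hQ x
  have h0 := hzero.tsum_eq
  rw [Summable.tsum_sub hs1 hs2, tsum_mul_left] at h0
  exact sub_eq_zero.mp h0

end S4

namespace S6
open SylvAux S2 S3 S4 Filter

lemma log_summable {q : ℂ} (β : ℂ) (hq : ‖q‖ < 1) (n : ℕ) :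
    Summable (fun j : ℕ => Complex.log (1 - β * q ^ (j + n + 1))) := by
  have hgeo : Summable (fun j : ℕ => (3/2) * (‖β‖ * (‖q‖^(n+1) * ‖q‖ ^ j))) :=
    (((summable_geometric_of_lt_one (norm_nonneg q) hq).mul_left _).mul_left _).mul_left _
  apply Summable.of_norm_bounded_eventually hgeo
  rw [Nat.cofinite_eq_atTop]
  have ht : Tendsto (fun j : ℕ => ‖β‖ * ‖q‖ ^ j) atTop (nhds 0) := by
    simpa using (tendsto_pow_atTop_nhds_zero_of_lt_one (norm_nonneg q) hq).const_mul ‖β‖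
  filter_upwards [ht.eventually (eventually_le_nhds (show (0:ℝ) < 1/2 by norm_num))] with j hj
  have hz : ‖-(β * q ^ (j + n + 1))‖ ≤ 1/2 := by
    rw [norm_neg, norm_mul, norm_pow]
    calc ‖β‖ * ‖q‖ ^ (j+n+1) ≤ ‖β‖ * ‖q‖ ^ j :=
          mul_le_mul_of_nonneg_left (pow_le_pow_of_le_one (norm_nonneg q) hq.le (by omega))
            (norm_nonneg β)
      _ ≤ 1/2 := hj
  calc ‖Complex.log (1 - β * q ^ (j+n+1))‖
      = ‖Complex.log (1 + -(β * q ^ (j+n+1)))‖ := by rw [sub_eq_add_neg]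
    _ ≤ 3/2 * ‖-(β * q ^ (j+n+1))‖ := Complex.norm_log_one_add_half_le_self hz
    _ = 3/2 * (‖β‖ * (‖q‖^(n+1) * ‖q‖ ^ j)) := by
        rw [norm_neg, norm_mul, norm_pow]; ring

lemma multipliable_tail {q β : ℂ} (hq : ‖q‖ < 1) (hβ' : ∀ k, (1:ℂ) - β * q ^ (k+1) ≠ 0) (n : ℕ) :
    Multipliable (fun j : ℕ => 1 - β * q ^ (j + n + 1)) :=
  Complex.multipliable_of_summable_log (log_summable β hq n)

lemma tprod_tail_ne {q β : ℂ} (hq : ‖q‖ < 1) (hβ' : ∀ k, (1:ℂ) - β * q ^ (k+1) ≠ 0) (n : ℕ) :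
    (∏' j : ℕ, (1 - β * q ^ (j + n + 1))) ≠ 0 := by
  have h2 := Complex.cexp_tsum_eq_tprod (f := fun j => 1 - β * q ^ (j + n + 1))
    (fun j => hβ' (j + n)) (log_summable β hq n)
  rw [← h2]
  exact Complex.exp_ne_zero _

end S6

open SylvAux S2 S3 S4 S6 Filter in
/-- **Sylvester's formula.**
Let `q, β` be complex numbers with `|q| < 1` and `β q^j ≠ 1` for all `j ≥ 1`.  Then
`∑_{n=0}^{∞} (-1)^n β^n q^(n(3n+1)/2) (1 - β q^(2n+1)) / ((q;q)_n (β q^(n+1);q)_∞) = 1`,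
the series being convergent with sum `1`. -/
theorem sylvester_formula (q β : ℂ) (hq : ‖q‖ < 1)
    (hβ : ∀ j : ℕ, 1 ≤ j → β * q ^ j ≠ 1) :
    HasSum
      (fun n : ℕ =>
        (-1 : ℂ) ^ n * β ^ n * q ^ (n * (3 * n + 1) / 2) * (1 - β * q ^ (2 * n + 1)) /
          ((∏ j ∈ range n, (1 - q * q ^ j)) *
            ∏' j : ℕ, (1 - β * q ^ (n + 1) * q ^ j)))
      1 := by
  have hq' : ‖q‖ < 1 := hq
  have hβ' : ∀ k : ℕ, (1:ℂ) - β * q ^ (k+1) ≠ 0 := by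
    intro k h
    exact hβ (k+1) (by omega) (by linear_combination -h)
  obtain ⟨c, hc, hQ⟩ := Qp_lower hq'
  set P1 : ℂ := ∏' j : ℕ, (1 - β * q ^ (j + 1)) with hP1def
  -- the basic multipliable family
  have hm0 : Multipliable (fun j : ℕ => 1 - β * q ^ (j + 1)) := by
    have := multipliable_tail hq' hβ' 0
    simpa using this
  have hP1ne : P1 ≠ 0 := by
    have := tprod_tail_ne hq' hβ' 0
    rw [hP1def]
    simpa using this
  -- splitting of P1
  have hsplit : ∀ n : ℕ, P1 = Bp q β n * ∏' j : ℕ, (1 - β * q ^ (j + n + 1)) := by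
    intro n
    have h := Multipliable.prod_mul_tprod_nat_mul' (f := fun j : ℕ => 1 - β * q ^ (j + 1)) (k := n)
      (multipliable_tail hq' hβ' n)
    rw [hP1def, ← h]
    congr 1
  -- G and its properties
  set G : ℂ → ℂ := fun x => ∑' n, tt q x n with hGdef
  have htt0 : ∀ x : ℂ, tt q x 0 = 1 - x * q := by
    intro x
    simp [tt, Bp, Qp, aa]
  -- iterated functional equation
  have hiter : ∀ N : ℕ, G β = Bp q β N * G (β * q ^ N) := by
    intro N
    induction N with
    | zero => simp [Bp]
    | succ N ih =>
      have hfe : G (β * q ^ N) = (1 - (β * q ^ N) * q) * G ((β * q ^ N) * q) :=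
        funEq hq' hc hQ (β * q ^ N)
      have h1 : β * q ^ N * q = β * q ^ (N+1) := by ring
      rw [h1] at hfe
      have h2 : Bp q β (N+1) = Bp q β N * (1 - β * q ^ (N+1)) := Finset.prod_range_succ _ N
      rw [ih, hfe, h2]; ring
  -- tail bound for G near 0
  set R : ℝ := ‖β‖ with hRdef
  set E : ℝ := (1 + R) * Real.exp (R * ‖q‖ * (1 - ‖q‖)⁻¹) / c with hEdef
  set T : ℝ := ∑' n : ℕ, R ^ n * ‖q‖ ^ aa n with hTdef
  have hTsummable := summable_pow_aa (norm_nonneg β) (norm_nonneg q) hq'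
  have hEnonneg : 0 ≤ E := by
    rw [hEdef]
    have : (0:ℝ) ≤ 1 + R := by positivity
    positivity
  have htail : ∀ x : ℂ, ‖x‖ ≤ R → ‖G x - 1‖ ≤ ‖x‖ * (‖q‖ + E * T) := by
    intro x hx
    have hsum := summable_tt hq' hc hQ x
    have hGx : G x = (1 - x * q) + ∑' n, tt q x (n+1) := by
      have h0 := Summable.tsum_eq_zero_add hsum
      rw [htt0 x] at h0
      exact h0
    have hmajsum : Summable (fun n : ℕ => ‖x‖ * (E * (R ^ n * ‖q‖ ^ aa n))) :=
      (hTsummable.mul_left _).mul_left _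
    have hbound : ∀ n : ℕ, ‖tt q x (n+1)‖ ≤ ‖x‖ * (E * (R ^ n * ‖q‖ ^ aa n)) := by
      intro n
      have h1 := norm_tt_le hq' hc hQ hx (n+1)
      rw [← hEdef] at h1
      refine h1.trans ?_
      have e1 : ‖x‖ ^ (n+1) ≤ ‖x‖ * R ^ n := by
        rw [pow_succ, mul_comm]
        exact mul_le_mul_of_nonneg_left (pow_le_pow_left₀ (norm_nonneg x) hx n) (norm_nonneg x)
      have e2 : ‖q‖ ^ aa (n+1) ≤ ‖q‖ ^ aa n :=
        pow_le_pow_of_le_one (norm_nonneg q) hq'.le (by rw [aa_succ]; omega)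
      calc E * (‖x‖ ^ (n+1) * ‖q‖ ^ aa (n+1)) ≤ E * ((‖x‖ * R ^ n) * ‖q‖ ^ aa n) := by
            apply mul_le_mul_of_nonneg_left _ hEnonneg
            exact mul_le_mul e1 e2 (by positivity) (by positivity)
        _ = ‖x‖ * (E * (R ^ n * ‖q‖ ^ aa n)) := by ring
    have hsumnorm : Summable (fun n : ℕ => ‖tt q x (n+1)‖) :=
      Summable.of_nonneg_of_le (fun n => norm_nonneg _) hbound hmajsum
    have htails : ‖∑' n, tt q x (n+1)‖ ≤ ‖x‖ * (E * T) := by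
      refine (norm_tsum_le_tsum_norm hsumnorm).trans ?_
      calc ∑' n, ‖tt q x (n+1)‖ ≤ ∑' n : ℕ, ‖x‖ * (E * (R ^ n * ‖q‖ ^ aa n)) :=
            Summable.tsum_le_tsum hbound hsumnorm hmajsum
        _ = ‖x‖ * (E * T) := by
            rw [tsum_mul_left, tsum_mul_left, hTdef]
    calc ‖G x - 1‖ = ‖-(x*q) + ∑' n, tt q x (n+1)‖ := by rw [hGx]; congr 1; ring
      _ ≤ ‖-(x*q)‖ + ‖∑' n, tt q x (n+1)‖ := norm_add_le _ _
      _ ≤ ‖x‖ * ‖q‖ + ‖x‖ * (E * T) := by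
          rw [norm_neg, norm_mul]
          exact add_le_add le_rfl htails
      _ = ‖x‖ * (‖q‖ + E * T) := by ring
  -- limits
  have hBtends : Tendsto (fun N => Bp q β N) atTop (nhds P1) := by
    have := hm0.hasProd.tendsto_prod_nat
    exact this
  have hGtends : Tendsto (fun N => G (β * q ^ N)) atTop (nhds 1) := by
    rw [tendsto_iff_norm_sub_tendsto_zero]
    have hb : ∀ N : ℕ, ‖G (β * q ^ N) - 1‖ ≤ (‖β‖ * (‖q‖ + E * T)) * ‖q‖ ^ N := by
      intro N
      have hx : ‖β * q ^ N‖ ≤ R := by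
        rw [norm_mul, norm_pow, hRdef]
        have h2 : ‖q‖ ^ N ≤ 1 := pow_le_one₀ (norm_nonneg q) hq'.le
        nlinarith [norm_nonneg β]
      have := htail (β * q ^ N) hx
      rw [norm_mul, norm_pow] at this
      calc ‖G (β * q ^ N) - 1‖ ≤ ‖β‖ * ‖q‖ ^ N * (‖q‖ + E * T) := this
        _ = (‖β‖ * (‖q‖ + E * T)) * ‖q‖ ^ N := by ring
    refine squeeze_zero (fun N => norm_nonneg _) hb ?_
    simpa using (tendsto_pow_atTop_nhds_zero_of_lt_one (norm_nonneg q) hq').const_mul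
      (‖β‖ * (‖q‖ + E * T))
  have hGβ : G β = P1 := by
    have hconv : Tendsto (fun N => Bp q β N * G (β * q ^ N)) atTop (nhds (P1 * 1)) :=
      hBtends.mul hGtends
    have hconst : (fun N : ℕ => Bp q β N * G (β * q ^ N)) = fun _ => G β :=
      funext fun N => (hiter N).symm
    rw [hconst] at hconv
    have := tendsto_nhds_unique tendsto_const_nhds hconv
    rw [this, mul_one]
  have hasSum_tt : HasSum (tt q β) P1 := by
    rw [(summable_tt hq' hc hQ β).hasSum_iff]
    exact hGβ
  -- final: rewrite the statement's function as tt q β n / P1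
  have hfun : (fun n : ℕ =>
        (-1 : ℂ) ^ n * β ^ n * q ^ (n * (3 * n + 1) / 2) * (1 - β * q ^ (2 * n + 1)) /
          ((∏ j ∈ range n, (1 - q * q ^ j)) *
            ∏' j : ℕ, (1 - β * q ^ (n + 1) * q ^ j)))
      = fun n => tt q β n / P1 := by
    funext n
    have hQ' : ∏ j ∈ range n, (1 - q * q ^ j) = Qp q n :=
      Finset.prod_congr rfl fun j _ => by rw [pow_succ']
    have hP' : (∏' j : ℕ, (1 - β * q ^ (n + 1) * q ^ j)) = ∏' j : ℕ, (1 - β * q ^ (j + n + 1)) :=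
      tprod_congr fun j => by rw [show β * q ^ (n+1) * q ^ j = β * q ^ (j+n+1) by ring]
    rw [hQ', hP', tt, hsplit n]
    have hBne : Bp q β n ≠ 0 := by
      rw [Bp]
      exact Finset.prod_ne_zero_iff.2 fun j _ => hβ' j
    have hPtne := tprod_tail_ne hq' hβ' n
    have hQne := Qp_ne hq' n
    rw [aa]
    field_simp
  rw [hfun]
  have := hasSum_tt.div_const P1
  rwa [div_self hP1ne] at this
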